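/- Let C be a linearly ordered set and let g : C → C be order reversing (antitone) with no fixed point. Then C can be extended by adding exactly one element to a linearly ordered set with an order reversing operation having a center: there exist a linearly ordered set D, an order reversing operation g_D : D → D, an order embedding e : C → D with e ∘ g = g_D ∘ e, and an element c ∈ D with g_D(c) = c, such that D = range(e) ∪ {c}. If moreover g is strict order reversing on C, then g_D can be taken strict order reversing on D. -/

import Mathlib

/-- A bundled linearly ordered set. -/
structure BundledLinearOrder where
  carrier : Type
  [ord : LinearOrder carrier]

attribute [instance] BundledLinearOrder.ord

section Aux

variable {C : Type} [LinearOrder C] (g : C → C)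

/-- The order on `Option C` putting `none` in the "center". -/
def extLE : Option C → Option C → Prop
  | some a, some b => a ≤ b
  | some a, none => a < g a
  | none, some b => g b < b
  | none, none => True

/-- Decidability of `extLE`. -/
def extDecLE : DecidableRel (extLE g) := fun x y =>
  match x, y with
  | some a, some b => inferInstanceAs (Decidable (a ≤ b))
  | some a, none => inferInstanceAs (Decidable (a < g a))
  | none, some b => inferInstanceAs (Decidable (g b < b))
  | none, none => inferInstanceAs (Decidable True)

/-- Decidability of the strict version. -/
def extDecLT (g : C → C) : (x y : Option C) → Decidable (extLE g x y ∧ ¬ extLE g y x) :=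
  fun x y => instDecidableAnd (dp := extDecLE g x y)
    (dq := instDecidableNot (dp := extDecLE g y x))

theorem extLR (hg : Antitone g) {a b : C} (ha : a < g a) (hb : g b < b) : a < b := by
  by_contra h
  push_neg at h
  exact absurd (lt_of_le_of_lt (hg h) (lt_of_lt_of_le hb h)) (not_lt.2 ha.le)

/-- The linear order on `Option C` extending that of `C` with a center. -/
def extLO (hg : Antitone g) (hnc : ∀ c, g c ≠ c) : LinearOrder (Option C) where
  le := extLE g
  lt x y := extLE g x y ∧ ¬ extLE g y x
  lt_iff_le_not_ge _ _ := Iff.rfl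
  le_refl x := by cases x <;> simp [extLE]
  le_trans x y z := by
    cases x <;> cases y <;> cases z <;> simp only [extLE] <;> intro h1 h2
    · trivial
    · exact h2
    · trivial
    · exact lt_of_le_of_lt (hg h2) (lt_of_lt_of_le h1 h2)
    · exact h1
    · exact (extLR g hg h1 h2).le
    · exact lt_of_le_of_lt h1 (lt_of_lt_of_le h2 (hg h1))
    · exact le_trans h1 h2
  le_antisymm x y := by
    cases x <;> cases y <;> simp only [extLE] <;> intro h1 h2
    · trivial
    · exact absurd h2 (not_lt.2 h1.le)
    · exact absurd h1 (not_lt.2 h2.le)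
    · exact congrArg some (le_antisymm h1 h2)
  le_total x y := by
    cases x <;> cases y <;> simp only [extLE]
    · exact Or.inl trivial
    · exact (hnc _).lt_or_gt
    · exact ((hnc _).lt_or_gt).symm
    · exact le_total _ _
  toDecidableLE := extDecLE g
  toDecidableEq := inferInstance
  toDecidableLT := extDecLT g
  compare x y :=
    @compareOfLessAndEq _ x y ⟨fun a b => extLE g a b ∧ ¬ extLE g b a⟩
      (extDecLT g x y) inferInstance
  compare_eq_compareOfLessAndEq := fun _ _ => rfl
  min x y := @ite _ (extLE g x y) (extDecLE g x y) x y
  max x y := @ite _ (extLE g x y) (extDecLE g x y) y x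
  min_def _ _ := rfl
  max_def _ _ := rfl

theorem extLO_lt_some_none (hg : Antitone g) (hnc : ∀ c, g c ≠ c) {a : C} :
    (extLO g hg hnc).lt (some a) none ↔ a < g a :=
  ⟨fun h => h.1, fun h => ⟨h, lt_asymm h⟩⟩

theorem extLO_lt_none_some (hg : Antitone g) (hnc : ∀ c, g c ≠ c) {b : C} :
    (extLO g hg hnc).lt none (some b) ↔ g b < b :=
  ⟨fun h => h.1, fun h => ⟨h, lt_asymm h⟩⟩

theorem extLO_lt_some_some (hg : Antitone g) (hnc : ∀ c, g c ≠ c) {a b : C} :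
    (extLO g hg hnc).lt (some a) (some b) ↔ a < b :=
  ⟨fun h => lt_of_le_not_ge h.1 h.2, fun h => ⟨h.le, fun h' => absurd h' (not_le.2 h)⟩⟩

end Aux

/-- A linearly ordered set with an order reversing operation and no fixed point
can be extended, by adding exactly one element, to a linearly ordered set with
an order reversing operation having a center; if the original operation is
strict order reversing, the extended operation can be taken strict order
reversing as well. -/
theorem antitone_no_center_one_point_extension
    {C : Type} [LinearOrder C] (g : C → C) (hg : Antitone g)
    (hnc : ∀ c, g c ≠ c) :
    ∃ (D : BundledLinearOrder) (gD : D.carrier → D.carrier)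
      (e : C ↪o D.carrier) (c : D.carrier),
      Antitone gD ∧
      (∀ x, e (g x) = gD (e x)) ∧
      gD c = c ∧
      c ∉ Set.range e ∧
      Set.range e ∪ {c} = Set.univ ∧
      (StrictAnti g → StrictAnti gD) := by
  classical
  refine ⟨{ carrier := Option C, ord := extLO g hg hnc },
    Option.map g,
    { toFun := some, inj' := Option.some_injective C,
      map_rel_iff' := Iff.rfl },
    none, ?_, ?_, ?_, ?_, ?_, ?_⟩
  · intro x y h
    cases x <;> cases y
    · trivial
    · exact lt_of_le_of_ne (hg h.le) (hnc _).symm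
    · exact lt_of_le_of_ne (hg h.le) (hnc _)
    · exact hg h
  · intro x; rfl
  · rfl
  · rintro ⟨x, hx⟩
    exact Option.some_ne_none x hx
  · ext x
    cases x with
    | none => simp
    | some a => exact ⟨fun _ => trivial, fun _ => Or.inl ⟨a, rfl⟩⟩
  · intro hs x y h
    cases x <;> cases y
    · exact absurd h.1 h.2
    · exact (extLO_lt_some_none g hg hnc).mpr
        (lt_of_le_of_ne (hg ((extLO_lt_none_some g hg hnc).mp h).le) (hnc _).symm)
    · exact (extLO_lt_none_some g hg hnc).mpr
        (lt_of_le_of_ne (hg ((extLO_lt_some_none g hg hnc).mp h).le) (hnc _))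
    · exact (extLO_lt_some_some g hg hnc).mpr
        (hs ((extLO_lt_some_some g hg hnc).mp h))
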